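/- For all t > 0, ln(sinh(t)/t) < (1/6)t^2 - (1/180)t^4 + (1/2835)t^6. -/

import Mathlib

open Real Filter Set Topology

private lemma Apos (t : ℝ) (ht : 0 < t) :
    0 < 1 - t + t^2/3 - t^4/45 + 2*t^6/945 := by
  nlinarith [sq_nonneg (t - 2), sq_nonneg (t*(t-2)), sq_nonneg (t^2*(t-2)),
    sq_nonneg (t^2 - 4), sq_nonneg (t^3 - 4*t), sq_nonneg t, sq_nonneg (t-1)]

private lemma key (t : ℝ) (ht : 0 < t) :
    t * Real.cosh t < (1 + t^2/3 - t^4/45 + 2*t^6/945) * Real.sinh t := by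
  have hA := Apos t ht
  have hE : 0 < Real.exp t := Real.exp_pos t
  have hexp : (∑ i ∈ Finset.range 10, (2*t)^i / (Nat.factorial i : ℝ)) ≤ Real.exp (2*t) :=
    Real.sum_le_exp_of_nonneg (by positivity) 10
  have hS : (∑ i ∈ Finset.range 10, (2*t)^i / (Nat.factorial i : ℝ)) =
      1 + 2*t + 2*t^2 + (4/3)*t^3 + (2/3)*t^4 + (4/15)*t^5 + (4/45)*t^6
        + (8/315)*t^7 + (2/315)*t^8 + (4/2835)*t^9 := by
    simp [Finset.sum_range_succ]
    norm_num [Nat.factorial]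
    ring
  have hE2 : Real.exp (2*t) = Real.exp t ^ 2 := by
    rw [two_mul, Real.exp_add, sq]
  have hexp' : 1 + 2*t + 2*t^2 + (4/3)*t^3 + (2/3)*t^4 + (4/15)*t^5 + (4/45)*t^6
        + (8/315)*t^7 + (2/315)*t^8 + (4/2835)*t^9 ≤ Real.exp t ^ 2 := by
    rw [← hS, ← hE2]; exact hexp
  have h1 : (1 - t + t^2/3 - t^4/45 + 2*t^6/945) *
      (1 + 2*t + 2*t^2 + (4/3)*t^3 + (2/3)*t^4 + (4/15)*t^5 + (4/45)*t^6
        + (8/315)*t^7 + (2/315)*t^8 + (4/2835)*t^9)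
      - ((1 + t^2/3 - t^4/45 + 2*t^6/945) + t)
      = (2/4725)*t^9 + (2/14175)*t^10 + (4/8505)*t^11 + (2/42525)*t^12
        + (4/178605)*t^13 + (4/297675)*t^14 + (8/2679075)*t^15 := by ring
  have hBS : (1 + t^2/3 - t^4/45 + 2*t^6/945) + t
      < (1 - t + t^2/3 - t^4/45 + 2*t^6/945) *
        (1 + 2*t + 2*t^2 + (4/3)*t^3 + (2/3)*t^4 + (4/15)*t^5 + (4/45)*t^6
          + (8/315)*t^7 + (2/315)*t^8 + (4/2835)*t^9) := by
    nlinarith [pow_pos ht 9, pow_pos ht 10, pow_pos ht 11, pow_pos ht 12,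
      pow_pos ht 13, pow_pos ht 14, pow_pos ht 15]
  have hfin : (1 + t^2/3 - t^4/45 + 2*t^6/945) + t
      < (1 - t + t^2/3 - t^4/45 + 2*t^6/945) * Real.exp t ^ 2 :=
    lt_of_lt_of_le hBS (mul_le_mul_of_nonneg_left hexp' hA.le)
  rw [Real.cosh_eq, Real.sinh_eq]
  have hne : Real.exp t ≠ 0 := hE.ne'
  have hexpand : (1 + t^2/3 - t^4/45 + 2*t^6/945) * ((Real.exp t - Real.exp (-t))/2)
      - t * ((Real.exp t + Real.exp (-t))/2)
      = ((1 - t + t^2/3 - t^4/45 + 2*t^6/945) * Real.exp t ^ 2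
          - ((1 + t^2/3 - t^4/45 + 2*t^6/945) + t)) / (2 * Real.exp t) := by
    rw [Real.exp_neg]
    field_simp
    ring
  have hpos : 0 < ((1 - t + t^2/3 - t^4/45 + 2*t^6/945) * Real.exp t ^ 2
      - ((1 + t^2/3 - t^4/45 + 2*t^6/945) + t)) / (2 * Real.exp t) :=
    div_pos (by linarith) (by positivity)
  linarith [hexpand ▸ hpos]

private noncomputable def Gfun (t : ℝ) : ℝ :=
  (1 / 6) * t ^ 2 - (1 / 180) * t ^ 4 + (1 / 2835) * t ^ 6 - Real.log (Real.sinh t / t)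

private lemma G_hasDeriv (x : ℝ) (hx : 0 < x) :
    HasDerivAt Gfun
      (x/3 - x^3/45 + (2/945)*x^5 - (Real.cosh x / Real.sinh x - 1/x)) x := by
  have hs : 0 < Real.sinh x := Real.sinh_pos_iff.mpr hx
  have h1 : HasDerivAt (fun t => Real.log (Real.sinh t)) (Real.cosh x / Real.sinh x) x :=
    (Real.hasDerivAt_sinh x).log hs.ne'
  have h2 : HasDerivAt Real.log x⁻¹ x := Real.hasDerivAt_log hx.ne'
  have hpoly : HasDerivAt (fun t : ℝ => (1/6)*t^2 - (1/180)*t^4 + (1/2835)*t^6)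
      (x/3 - x^3/45 + (2/945)*x^5) x := by
    have h := (((hasDerivAt_pow 2 x).const_mul (1/6 : ℝ)).sub
      ((hasDerivAt_pow 4 x).const_mul (1/180 : ℝ))).add
      ((hasDerivAt_pow 6 x).const_mul (1/2835 : ℝ))
    refine h.congr_deriv ?_
    push_cast
    ring
  have hH : HasDerivAt (fun t => (1/6)*t^2 - (1/180)*t^4 + (1/2835)*t^6
      - (Real.log (Real.sinh t) - Real.log t))
      (x/3 - x^3/45 + (2/945)*x^5 - (Real.cosh x / Real.sinh x - 1/x)) x := by
    have := hpoly.sub (h1.sub h2)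
    simp only [one_div] at this ⊢
    exact this
  refine hH.congr_of_eventuallyEq ?_
  filter_upwards [Ioi_mem_nhds hx] with y hy
  have hy0 : (0:ℝ) < y := hy
  have hsy : 0 < Real.sinh y := Real.sinh_pos_iff.mpr hy0
  unfold Gfun
  rw [Real.log_div hsy.ne' hy0.ne']

private lemma G_deriv_pos (x : ℝ) (hx : 0 < x) : 0 < deriv Gfun x := by
  rw [(G_hasDeriv x hx).deriv]
  have hs : 0 < Real.sinh x := Real.sinh_pos_iff.mpr hx
  have hk := key x hx
  have h2 : Real.cosh x / Real.sinh x < x/3 - x^3/45 + (2/945)*x^5 + 1/x := by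
    rw [div_lt_iff₀ hs]
    have h1x : x * (1/x) = 1 := by field_simp
    nlinarith [hk, h1x, hs, hx]
  linarith

private lemma G_cont : ContinuousOn Gfun (Set.Ici (0:ℝ)) := by
  intro x hx
  rcases eq_or_lt_of_le (Set.mem_Ici.mp hx) with h0 | h0
  · -- x = 0
    subst h0
    rw [← continuousWithinAt_Ioi_iff_Ici]
    have hG0 : Gfun 0 = 0 := by simp [Gfun]
    rw [ContinuousWithinAt, hG0]
    have hslope : Tendsto (fun t => Real.sinh t / t) (𝓝[≠] (0:ℝ)) (𝓝 1) := by
      have h := Real.hasDerivAt_sinh 0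
      rw [hasDerivAt_iff_tendsto_slope] at h
      simp only [Real.sinh_zero, Real.cosh_zero, slope_fun_def, vsub_eq_sub, smul_eq_mul, sub_zero] at h
      exact h.congr fun y => (div_eq_inv_mul _ _).symm
    have hslope' : Tendsto (fun t => Real.sinh t / t) (𝓝[>] (0:ℝ)) (𝓝 1) :=
      hslope.mono_left (nhdsWithin_mono _ (fun y hy => ne_of_gt hy))
    have hlog : Tendsto (fun t => Real.log (Real.sinh t / t)) (𝓝[>] (0:ℝ)) (𝓝 0) := by
      have := (Real.continuousAt_log one_ne_zero).tendsto.comp hslope'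
      simpa [Function.comp_def] using this
    have hcpoly : Continuous (fun t : ℝ => (1/6)*t^2 - (1/180)*t^4 + (1/2835)*t^6) := by
      continuity
    have hpoly : Tendsto (fun t : ℝ => (1/6)*t^2 - (1/180)*t^4 + (1/2835)*t^6)
        (𝓝[>] (0:ℝ)) (𝓝 0) := by
      have h := (hcpoly.tendsto 0).mono_left (nhdsWithin_le_nhds : 𝓝[>] (0:ℝ) ≤ 𝓝 0)
      simpa using h
    have h2 := hpoly.sub hlog
    rw [sub_zero] at h2
    exact h2
  · -- x > 0
    have hsx : 0 < Real.sinh x := Real.sinh_pos_iff.mpr h0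
    have hdiv : ContinuousAt (fun t => Real.sinh t / t) x :=
      (Real.continuous_sinh.continuousAt).div continuousAt_id h0.ne'
    have hlog : ContinuousAt (fun t => Real.log (Real.sinh t / t)) x :=
      (Real.continuousAt_log (by positivity)).comp hdiv
    have hcpoly : Continuous (fun t : ℝ => (1/6)*t^2 - (1/180)*t^4 + (1/2835)*t^6) := by
      continuity
    exact ((hcpoly.continuousAt).sub hlog).continuousWithinAt

theorem log_sinh_div_lt_deg6 (t : ℝ) (ht : 0 < t) :
    Real.log (Real.sinh t / t) <
      (1 / 6) * t ^ 2 - (1 / 180) * t ^ 4 + (1 / 2835) * t ^ 6 := by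
  have hmono : StrictMonoOn Gfun (Set.Ici (0:ℝ)) := by
    apply strictMonoOn_of_deriv_pos (convex_Ici 0) G_cont
    intro x hx
    rw [interior_Ici] at hx
    exact G_deriv_pos x hx
  have h := hmono (Set.self_mem_Ici) (Set.mem_Ici.mpr ht.le) ht
  have hG0 : Gfun 0 = 0 := by simp [Gfun]
  rw [hG0] at h
  unfold Gfun at h
  linarith
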